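/- For 0 ≤ γ < 1 define C_γ = Σ_{j=2}^∞ γ^{j−2}/j (so that C_γ = −{γ + log(1−γ)}/γ² when γ > 0). Let Y be a random variable with Y ≥ −γ almost surely and E|Y| < ∞. Then E[ exp( Y − E Y − C_γ·Y² ) ] ≤ 1. -/

import Mathlib

open MeasureTheory

lemma aux_log_quad {y : ℝ} (hy : 0 ≤ y) : y - y ^ 2 / 2 ≤ Real.log (1 + y) := by
  set f : ℝ → ℝ := fun y => Real.log (1 + y) - (y - y ^ 2 / 2) with hf
  have hd : ∀ x ∈ Set.Ioi (0 : ℝ), HasDerivAt f (1 / (1 + x) - (1 - x)) x := by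
    intro x hx
    have hx0 : (0 : ℝ) < x := hx
    have h1 : HasDerivAt (fun y : ℝ => 1 + y) 1 x := by
      simpa using (hasDerivAt_id x).const_add 1
    have h2 : HasDerivAt (fun y : ℝ => Real.log (1 + y)) (1 / (1 + x)) x := by
      have := (Real.hasDerivAt_log (by linarith : (1 : ℝ) + x ≠ 0)).comp x h1
      exact this.congr_deriv (by simp)
    have h3 : HasDerivAt (fun y : ℝ => y - y ^ 2 / 2) (1 - x) x := by
      have := ((hasDerivAt_id' x).sub (((hasDerivAt_pow 2 x).div_const 2)))
      refine this.congr_deriv ?_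
      ring
    exact h2.sub h3
  have hmono : MonotoneOn f (Set.Ici (0 : ℝ)) := by
    apply monotoneOn_of_deriv_nonneg (convex_Ici 0)
    · apply ContinuousOn.sub
      · apply ContinuousOn.log (by fun_prop)
        intro x hx
        have : (0 : ℝ) ≤ x := hx
        positivity
      · fun_prop
    · intro x hx
      rw [interior_Ici] at hx
      exact ((hd x hx).differentiableAt).differentiableWithinAt
    · intro x hx
      rw [interior_Ici] at hx
      rw [(hd x hx).deriv]
      have hx0 : (0 : ℝ) < x := hx
      have : 1 / (1 + x) - (1 - x) = x ^ 2 / (1 + x) := by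
        field_simp
        ring
      rw [this]
      positivity
  have h0 : f 0 ≤ f y := hmono (by simp) (by exact hy) hy
  simp only [hf] at h0
  simp only [add_zero, Real.log_one] at h0
  linarith

lemma aux_summable {γ : ℝ} (hγ0 : 0 ≤ γ) (hγ1 : γ < 1) :
    Summable (fun j : ℕ => γ ^ j / ((j : ℝ) + 2)) := by
  apply Summable.of_nonneg_of_le (fun j => by positivity)
    (fun j => ?_) (summable_geometric_of_lt_one hγ0 hγ1)
  rw [div_le_iff₀ (by positivity)]
  nlinarith [pow_nonneg hγ0 j, (Nat.cast_nonneg j : (0:ℝ) ≤ j)]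

lemma aux_neg_case {γ : ℝ} (hγ0 : 0 ≤ γ) (hγ1 : γ < 1) {t : ℝ} (ht0 : 0 ≤ t) (htγ : t ≤ γ) :
    -t - Real.log (1 - t) ≤ (∑' j : ℕ, γ ^ j / ((j : ℝ) + 2)) * t ^ 2 := by
  have habs : |t| < 1 := by rw [abs_of_nonneg ht0]; linarith
  have h1 : HasSum (fun n : ℕ => t ^ (n + 1) / ((n : ℝ) + 1)) (-Real.log (1 - t)) :=
    Real.hasSum_pow_div_log_of_abs_lt_one habs
  have h2 : HasSum (fun n : ℕ => t ^ (n + 2) / ((n : ℝ) + 2)) (-Real.log (1 - t) - t) := by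
    have h2' : HasSum (fun n : ℕ => t ^ ((n + 1) + 1) / (((n + 1 : ℕ) : ℝ) + 1))
        (-Real.log (1 - t) - t) := by
      apply (hasSum_nat_add_iff (f := fun n : ℕ => t ^ (n + 1) / ((n : ℝ) + 1)) 1).mpr
      simpa using h1
    convert h2' using 2 with n
    push_cast
    ring_nf
  have h4 : HasSum (fun j : ℕ => γ ^ j / ((j : ℝ) + 2) * t ^ 2)
      ((∑' j : ℕ, γ ^ j / ((j : ℝ) + 2)) * t ^ 2) :=
    (aux_summable hγ0 hγ1).hasSum.mul_right _
  have := hasSum_le (f := fun n : ℕ => t ^ (n + 2) / ((n : ℝ) + 2)) (fun n => ?_) h2 h4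
  · linarith
  · show t ^ (n + 2) / ((n : ℝ) + 2) ≤ γ ^ n / ((n : ℝ) + 2) * t ^ 2
    have heq : t ^ (n + 2) / ((n : ℝ) + 2) = t ^ n / ((n : ℝ) + 2) * t ^ 2 := by ring
    rw [heq]
    gcongr

lemma aux_key {γ : ℝ} (hγ0 : 0 ≤ γ) (hγ1 : γ < 1) {y : ℝ} (hy : -γ ≤ y) :
    Real.exp (y - (∑' j : ℕ, γ ^ j / ((j : ℝ) + 2)) * y ^ 2) ≤ 1 + y := by
  set C := ∑' j : ℕ, γ ^ j / ((j : ℝ) + 2) with hC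
  have hy1 : (0 : ℝ) < 1 + y := by linarith
  have hlog : y - C * y ^ 2 ≤ Real.log (1 + y) := by
    rcases le_or_gt y 0 with h0 | h0
    · have := aux_neg_case hγ0 hγ1 (t := -y) (by linarith) (by linarith)
      have heq : (1 : ℝ) - -y = 1 + y := by ring
      rw [heq] at this
      nlinarith [this]
    · have h1 := aux_log_quad (le_of_lt h0)
      have hC2 : (1 : ℝ) / 2 ≤ C := by
        have := Summable.le_tsum (aux_summable hγ0 hγ1) 0 (fun j _ => by positivity)
        simpa using this
      nlinarith [sq_nonneg y]
  calc Real.exp (y - C * y ^ 2) ≤ Real.exp (Real.log (1 + y)) := Real.exp_le_exp.mpr hlog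
    _ = 1 + y := Real.exp_log hy1

/-- Lemma 5.1 (second part). -/
theorem stmt_15 {Ω : Type*} {mΩ : MeasurableSpace Ω} {μ : Measure Ω}
    [IsProbabilityMeasure μ]
    (γ : ℝ) (hγ0 : 0 ≤ γ) (hγ1 : γ < 1)
    (Y : Ω → ℝ) (hY : Integrable Y μ) (hbd : ∀ᵐ ω ∂μ, -γ ≤ Y ω) :
    ∫⁻ ω, ENNReal.ofReal
        (Real.exp (Y ω - (∫ x, Y x ∂μ) -
          (∑' j : ℕ, γ ^ j / ((j : ℝ) + 2)) * (Y ω) ^ 2)) ∂μ ≤ 1 := by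
  set C := ∑' j : ℕ, γ ^ j / ((j : ℝ) + 2) with hC
  set m := ∫ x, Y x ∂μ with hm
  have hbound : ∀ᵐ ω ∂μ, ENNReal.ofReal (Real.exp (Y ω - m - C * (Y ω) ^ 2)) ≤
      ENNReal.ofReal ((1 + Y ω) * Real.exp (-m)) := by
    filter_upwards [hbd] with ω hω
    apply ENNReal.ofReal_le_ofReal
    have h1 : Real.exp (Y ω - m - C * (Y ω) ^ 2)
        = Real.exp (Y ω - C * (Y ω) ^ 2) * Real.exp (-m) := by
      rw [← Real.exp_add]; ring_nf
    rw [h1]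
    exact mul_le_mul_of_nonneg_right (aux_key hγ0 hγ1 hω) (Real.exp_nonneg _)
  calc ∫⁻ ω, ENNReal.ofReal (Real.exp (Y ω - m - C * (Y ω) ^ 2)) ∂μ
      ≤ ∫⁻ ω, ENNReal.ofReal ((1 + Y ω) * Real.exp (-m)) ∂μ := lintegral_mono_ae hbound
    _ = ENNReal.ofReal (∫ ω, (1 + Y ω) * Real.exp (-m) ∂μ) := by
        rw [ofReal_integral_eq_lintegral_ofReal]
        · exact ((integrable_const (1:ℝ)).add hY).mul_const _
        · filter_upwards [hbd] with ω hω
          have : (0:ℝ) ≤ 1 + Y ω := by linarith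
          positivity
    _ ≤ 1 := by
        rw [integral_mul_const, integral_add (integrable_const 1) hY]
        simp only [integral_const, measure_univ, probReal_univ, ENNReal.toReal_one, smul_eq_mul, one_mul]
        rw [← hm]
        have h2 : (1 + m) * Real.exp (-m) ≤ 1 := by
          have h3 : 1 + m ≤ Real.exp m := by linarith [Real.add_one_le_exp m]
          calc (1 + m) * Real.exp (-m) ≤ Real.exp m * Real.exp (-m) :=
                mul_le_mul_of_nonneg_right h3 (Real.exp_nonneg _)
            _ = 1 := by rw [← Real.exp_add]; simp
        calc ENNReal.ofReal ((1 + m) * Real.exp (-m)) ≤ ENNReal.ofReal 1 :=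
              ENNReal.ofReal_le_ofReal h2
          _ = 1 := ENNReal.ofReal_one
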